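/- Let a, b, d, z, f be real numbers with a + 2b + d = 1, and let ρ be the two-qubit X-state with these parameters (diagonal (a,b,b,d), inner anti-diagonal entries z, corner entries f, zeros elsewhere). Let ρ_A and ρ_B be its partial traces. Then [ρ, ρ_A ⊗ ρ_B] = 0 if and only if f = 0 or a = d. Equivalently, writing f = (⟨σx σx⟩ − ⟨σy σy⟩)/4 and a − d = ⟨σz⟩, vanishing of the witness is equivalent to ⟨σx σx⟩ = ⟨σy σy⟩ or ⟨σz⟩ = 0. -/

import Mathlib

open Matrix Kronecker

/-- The two-qubit X-state with real parameters `a, b, d, z, f`: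
diagonal entries `(a, b, b, d)` in the basis order `(0,0),(0,1),(1,0),(1,1)`,
inner anti-diagonal entries `z`, corner entries `f`, zeros elsewhere. -/
def Xstate (a b d z f : ℝ) : Matrix (Fin 2 × Fin 2) (Fin 2 × Fin 2) ℂ :=
  Matrix.of fun x y =>
    if x = (0, 0) ∧ y = (0, 0) then (a : ℂ)
    else if x = (0, 1) ∧ y = (0, 1) then (b : ℂ)
    else if x = (1, 0) ∧ y = (1, 0) then (b : ℂ)
    else if x = (1, 1) ∧ y = (1, 1) then (d : ℂ)
    else if (x = (0, 1) ∧ y = (1, 0)) ∨ (x = (1, 0) ∧ y = (0, 1)) then (z : ℂ)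
    else if (x = (0, 0) ∧ y = (1, 1)) ∨ (x = (1, 1) ∧ y = (0, 0)) then (f : ℂ)
    else 0

/-- Eqs. (12)–(13) of the paper: for a trace-one two-qubit X-state, the witness
`[ρ, ρ_A ⊗ ρ_B]` vanishes if and only if `f = 0` (isotropy of the two-point
function in the XY plane, `⟨σxσx⟩ = ⟨σyσy⟩`) or `a = d` (vanishing transverse
magnetization, `⟨σz⟩ = 0`). -/
theorem witness_of_Xstate_vanishes_iff
    (a b d z f : ℝ) (htr : a + 2 * b + d = 1)
    (ρ : Matrix (Fin 2 × Fin 2) (Fin 2 × Fin 2) ℂ)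
    (hρ : ρ = Xstate a b d z f)
    (ρA : Matrix (Fin 2) (Fin 2) ℂ)
    (hρA : ρA = Matrix.of fun a₁ a₂ => ∑ b₁, ρ (a₁, b₁) (a₂, b₁))
    (ρB : Matrix (Fin 2) (Fin 2) ℂ)
    (hρB : ρB = Matrix.of fun b₁ b₂ => ∑ a₁, ρ (a₁, b₁) (a₁, b₂)) :
    ρ * (ρA ⊗ₖ ρB) - (ρA ⊗ₖ ρB) * ρ = 0 ↔ f = 0 ∨ a = d := by
  have htrC : (a : ℂ) + 2 * b + d = 1 := by exact_mod_cast htr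
  have hA : ρA = Matrix.diagonal ![(a : ℂ) + b, (b : ℂ) + d] := by
    subst hρ hρA
    ext i j
    fin_cases i <;> fin_cases j <;>
      simp [Xstate, Fin.sum_univ_two, Matrix.diagonal, Prod.ext_iff]
  have hB : ρB = Matrix.diagonal ![(a : ℂ) + b, (b : ℂ) + d] := by
    subst hρ hρB
    ext i j
    fin_cases i <;> fin_cases j <;>
      simp [Xstate, Fin.sum_univ_two, Matrix.diagonal, Prod.ext_iff]
  rw [hA, hB, Matrix.diagonal_kronecker_diagonal]
  set g : Fin 2 × Fin 2 → ℂ := fun p => ![(a : ℂ) + b, (b : ℂ) + d] p.1 * ![(a : ℂ) + b, (b : ℂ) + d] p.2 with hg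
  have hentry : ∀ x y, (ρ * Matrix.diagonal g - Matrix.diagonal g * ρ) x y
      = ρ x y * (g y - g x) := by
    intro x y
    simp [Matrix.sub_apply, Matrix.mul_diagonal, Matrix.diagonal_mul]
    ring
  have hf00 : g (0, 0) = ((a : ℂ) + b) ^ 2 := by simp [hg]; ring
  have hf11 : g (1, 1) = ((b : ℂ) + d) ^ 2 := by simp [hg]; ring
  constructor
  · intro h
    have h0 := hentry ((0 : Fin 2), (0 : Fin 2)) ((1 : Fin 2), (1 : Fin 2))
    rw [h] at h0
    have hρval : ρ ((0 : Fin 2), (0 : Fin 2)) ((1 : Fin 2), (1 : Fin 2)) = (f : ℂ) := by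
      rw [hρ]; norm_num [Xstate, Prod.ext_iff]
    rw [hρval, hf00, hf11, Matrix.zero_apply] at h0
    have key : (f : ℂ) * ((d : ℂ) - a) = 0 := by
      linear_combination -h0 - (f : ℂ) * ((d : ℂ) - a) * htrC
    rcases mul_eq_zero.mp key with hf | hda
    · left; exact_mod_cast hf
    · right
      have : (d : ℂ) = a := sub_eq_zero.mp hda
      exact_mod_cast this.symm
  · intro hcase
    have hfc : (f : ℂ) * (((b : ℂ) + d) ^ 2 - ((a : ℂ) + b) ^ 2) = 0 := by
      rcases hcase with hf | had
      · subst hf; simp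
      · have : (a : ℂ) = d := by exact_mod_cast had
        rw [this]; ring
    ext x y
    rw [hentry x y]
    rw [hρ]
    simp only [Xstate, Matrix.of_apply, Matrix.zero_apply]
    split_ifs with h1 h2 h3 h4 h5 h6
    · obtain ⟨hx, hy⟩ := h1; subst hx; subst hy; ring
    · obtain ⟨hx, hy⟩ := h2; subst hx; subst hy; ring
    · obtain ⟨hx, hy⟩ := h3; subst hx; subst hy; ring
    · obtain ⟨hx, hy⟩ := h4; subst hx; subst hy; ring
    · have hzg : g ((0 : Fin 2), (1 : Fin 2)) = g ((1 : Fin 2), (0 : Fin 2)) := by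
        simp [hg]; ring
      rcases h5 with ⟨hx, hy⟩ | ⟨hx, hy⟩ <;> (subst hx; subst hy; rw [hzg]; ring)
    · rcases h6 with ⟨hx, hy⟩ | ⟨hx, hy⟩ <;>
        (subst hx; subst hy; rw [hf00, hf11]; first | linear_combination hfc | linear_combination -hfc)
    · ring
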